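/- Let Z be a real random variable with cdf F(z) = P[Z ≤ z] and finite essential supremum, let Z_1,…,Z_{n−1} be iid with the same law as Z, set Z_n := esssup Z, let Z_(1) ≤ ⋯ ≤ Z_(n) be the order statistics of Z_1,…,Z_n, and define the coverages W_i = F(Z_(i)) − F(Z_(i−1)) for i ∈ {1,…,n}, with F(Z_(0)) := 0. Let U_1,…,U_{n−1} be iid uniform random variables on [0,1], let U_(1) ≤ ⋯ ≤ U_(n−1) be their order statistics with conventions U_(0) := 0 and U_(n) := 1, and let ν ∈ Δ^n be the spacings vector ν_i = U_(i) − U_(i−1) (which is uniformly distributed on Δ^n). Then for every Lebesgue measurable A ⊆ Δ^n (with A + K^n measurable), P[ W ∈ A + K^n ] ≥ P[ ν ∈ A + K^n ]. -/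

import Mathlib

open MeasureTheory ProbabilityTheory Pointwise

/-- The majorization cone `K^n`. -/
def majorCone (n : ℕ) : Set (Fin n → ℝ) :=
  {x | (∀ k : ℕ, k < n →
          0 ≤ ∑ i ∈ Finset.univ.filter (fun i : Fin n => (i : ℕ) < k), x i) ∧
        ∑ i, x i = 0}

/-- Increasing rearrangement (order statistics) of a finite tuple. -/
noncomputable def sortedVec {α : Type*} [LinearOrder α] {n : ℕ} (z : Fin n → α) : Fin n → α :=
  z ∘ Tuple.sort z

/-- The coverage `F(z_i) - F(z_{i-1})`, with the convention `F(z_0) := 0`. -/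
noncomputable def coverage {n : ℕ} (F : ℝ → ℝ) (z : Fin n → ℝ) (i : Fin n) : ℝ :=
  F (z i) - (if h : 0 < (i : ℕ) then F (z ⟨(i : ℕ) - 1, by have := i.isLt; omega⟩) else 0)

/-- The full sample vector `(Z_1, …, Z_{n-1}, M)`. -/
def fullVec {Ω : Type*} {n : ℕ} (Zs : Fin (n - 1) → Ω → ℝ) (M : ℝ) (i : Fin n) (ω : Ω) : ℝ :=
  if h : (i : ℕ) < n - 1 then Zs ⟨(i : ℕ), h⟩ ω else M

/-- The augmented uniform order statistics `U_(k)`, `k ∈ [n]`, with the convention `U_(n) := 1`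
(the index `k : Fin n` is `0`-based: `augOrder U k = U_(k+1)`). -/
noncomputable def augOrder {n : ℕ} (U : Fin (n - 1) → ℝ) (k : Fin n) : ℝ :=
  if h : (k : ℕ) + 1 < n then sortedVec U ⟨(k : ℕ), by omega⟩ else 1

/-- The spacings vector `ν_i = U_(i) - U_(i-1)`, `i ∈ [n]`, with `U_(0) := 0`, `U_(n) := 1`. -/
noncomputable def spacings {n : ℕ} (U : Fin (n - 1) → ℝ) (i : Fin n) : ℝ :=
  augOrder U i -
    (if h : 0 < (i : ℕ) then augOrder U ⟨(i : ℕ) - 1, by have := i.isLt; omega⟩ else 0)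

/-! ### Auxiliary definitions and lemmas -/

/-- Extension of a vector of length `n-1` to length `n` by the constant `c`. -/
def extVec (n : ℕ) (c : ℝ) (v : Fin (n - 1) → ℝ) : Fin n → ℝ :=
  fun i => if h : (i : ℕ) < n - 1 then v ⟨(i : ℕ), h⟩ else c

section Sums

lemma sum_diff {n : ℕ} (f : Fin n → ℝ) :
    ∀ k : ℕ, (hk : k ≤ n) →
    ∑ i ∈ Finset.univ.filter (fun i : Fin n => (i : ℕ) < k),
      (f i - (if h : 0 < (i : ℕ) then f ⟨(i : ℕ) - 1, by have := i.isLt; omega⟩ else 0))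
    = if h : 0 < k then f ⟨k - 1, by omega⟩ else 0 := by
  intro k
  induction k with
  | zero => intro _; simp
  | succ m ih =>
    intro hk
    have hmn : m < n := hk
    have hfilter : Finset.univ.filter (fun i : Fin n => (i : ℕ) < m + 1)
        = insert ⟨m, hmn⟩ (Finset.univ.filter (fun i : Fin n => (i : ℕ) < m)) := by
      ext i
      simp only [Finset.mem_filter, Finset.mem_insert, Finset.mem_univ, true_and, Fin.ext_iff]
      omega
    rw [hfilter, Finset.sum_insert (by simp), ih (by omega)]
    rw [dif_pos (Nat.succ_pos m)]
    by_cases h0 : 0 < m <;> simp [h0]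

lemma sum_coverage {n : ℕ} (F : ℝ → ℝ) (z : Fin n → ℝ) (k : ℕ) (hk : k ≤ n) :
    ∑ i ∈ Finset.univ.filter (fun i : Fin n => (i : ℕ) < k), coverage F z i
    = if h : 0 < k then F (z ⟨k - 1, by omega⟩) else 0 := by
  simpa [coverage] using sum_diff (fun i => F (z i)) k hk

lemma sum_spacings {n : ℕ} (u : Fin (n - 1) → ℝ) (k : ℕ) (hk : k ≤ n) :
    ∑ i ∈ Finset.univ.filter (fun i : Fin n => (i : ℕ) < k), spacings u i
    = if h : 0 < k then augOrder u ⟨k - 1, by omega⟩ else 0 := by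
  simpa [spacings] using sum_diff (augOrder u) k hk

end Sums

section Cone

lemma majorCone_add {n : ℕ} {x y : Fin n → ℝ} (hx : x ∈ majorCone n) (hy : y ∈ majorCone n) :
    x + y ∈ majorCone n := by
  refine ⟨fun k hk => ?_, ?_⟩
  · have h1 := hx.1 k hk
    have h2 := hy.1 k hk
    simp only [Pi.add_apply, Finset.sum_add_distrib]
    linarith
  · simp only [Pi.add_apply, Finset.sum_add_distrib, hx.2, hy.2, add_zero]

lemma mem_add_majorCone_of_dominates {n : ℕ} {A : Set (Fin n → ℝ)} {x y : Fin n → ℝ}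
    (hy : y ∈ A + majorCone n)
    (h1 : ∀ k : ℕ, k < n →
      ∑ i ∈ Finset.univ.filter (fun i : Fin n => (i : ℕ) < k), y i ≤
      ∑ i ∈ Finset.univ.filter (fun i : Fin n => (i : ℕ) < k), x i)
    (h2 : ∑ i, x i = ∑ i, y i) : x ∈ A + majorCone n := by
  obtain ⟨a, ha, c, hc, hac⟩ := Set.mem_add.mp hy
  have hxy : x - y ∈ majorCone n := by
    refine ⟨fun k hk => ?_, ?_⟩
    · simp only [Pi.sub_apply, Finset.sum_sub_distrib]
      linarith [h1 k hk]
    · simp only [Pi.sub_apply, Finset.sum_sub_distrib, h2, sub_self]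
  refine Set.mem_add.mpr ⟨a, ha, c + (x - y), majorCone_add hc hxy, ?_⟩
  funext i
  have h := congrFun hac i
  simp only [Pi.add_apply] at h
  simp only [Pi.add_apply, Pi.sub_apply]
  linarith

end Cone

section Sorted

lemma sortedVec_monotone {α : Type*} [LinearOrder α] {m : ℕ} (z : Fin m → α) :
    Monotone (sortedVec z) := Tuple.monotone_sort z

lemma sortedVec_perm_eq {α : Type*} [LinearOrder α] {m : ℕ} {f : Fin m → α}
    {σ : Equiv.Perm (Fin m)} (h : Monotone (f ∘ σ)) : f ∘ σ = sortedVec f :=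
  Tuple.comp_sort_eq_comp_iff_monotone.mpr h

lemma sortedVec_comp {m : ℕ} {g : ℝ → ℝ} {S : Set ℝ} (hg : MonotoneOn g S)
    (z : Fin m → ℝ) (hz : ∀ i, z i ∈ S) :
    sortedVec (g ∘ z) = g ∘ sortedVec z := by
  have h2 : Monotone ((g ∘ z) ∘ Tuple.sort z) := by
    intro a b hab
    exact hg (hz _) (hz _) (sortedVec_monotone z hab)
  exact (sortedVec_perm_eq (σ := Tuple.sort z) h2).symm

lemma sortedVec_le_iff {m : ℕ} (z : Fin m → ℝ) (j : Fin m) (a : ℝ) :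
    sortedVec z j ≤ a ↔ (j : ℕ) < (Finset.univ.filter fun i => z i ≤ a).card := by
  rw [← Tuple.lt_card_le_iff_apply_le_of_monotone (f := sortedVec z) (a := a) (j := j)
    (sortedVec_monotone z)]
  have h : Fintype.card {i // sortedVec z i ≤ a} = Fintype.card {i // z i ≤ a} :=
    Fintype.card_congr ((Tuple.sort z).subtypeEquiv (fun i => Iff.rfl))
  rw [← Fintype.card_subtype, ← Fintype.card_subtype, h]

lemma measurable_sortedVec {m : ℕ} (j : Fin m) :
    Measurable fun z : Fin m → ℝ => sortedVec z j := by
  apply measurable_of_Iic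
  intro a
  have h : (fun z : Fin m → ℝ => sortedVec z j) ⁻¹' Set.Iic a
      = (fun z : Fin m → ℝ => (Finset.univ.filter fun i => z i ≤ a).card) ⁻¹'
        {c : ℕ | (j : ℕ) < c} := by
    ext z
    simp [sortedVec_le_iff]
  rw [h]
  have hm : Measurable fun z : Fin m → ℝ => (Finset.univ.filter fun i => z i ≤ a).card := by
    simp only [Finset.card_filter]
    exact Finset.measurable_sum _ fun i _ =>
      Measurable.ite (measurableSet_le (measurable_pi_apply i) measurable_const)
        measurable_const measurable_const
  exact hm trivial

lemma sortedVec_extVec_one {n : ℕ} (hn : 1 ≤ n) (u : Fin (n - 1) → ℝ) (h1 : ∀ i, u i ≤ 1) :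
    sortedVec (extVec n 1 u) = augOrder u := by
  have hlt : ∀ i : Fin (n - 1), (i : ℕ) < n := fun i => by have := i.isLt; omega
  let τ := Tuple.sort u
  let σ : Equiv.Perm (Fin n) :=
  { toFun := fun i => if h : (i : ℕ) < n - 1 then ⟨(τ ⟨(i : ℕ), h⟩ : ℕ), hlt _⟩ else i
    invFun := fun i => if h : (i : ℕ) < n - 1 then ⟨(τ⁻¹ ⟨(i : ℕ), h⟩ : ℕ), hlt _⟩ else i
    left_inv := by
      intro i
      by_cases h : (i : ℕ) < n - 1
      · simp only [dif_pos h]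
        have h2 : ((τ ⟨(i : ℕ), h⟩ : Fin (n - 1)) : ℕ) < n - 1 := (τ ⟨(i : ℕ), h⟩).isLt
        rw [dif_pos h2]
        apply Fin.ext
        simp
      · simp only [dif_neg h]
    right_inv := by
      intro i
      by_cases h : (i : ℕ) < n - 1
      · simp only [dif_pos h]
        have h2 : ((τ⁻¹ ⟨(i : ℕ), h⟩ : Fin (n - 1)) : ℕ) < n - 1 := (τ⁻¹ ⟨(i : ℕ), h⟩).isLt
        rw [dif_pos h2]
        apply Fin.ext
        simp
      · simp only [dif_neg h] }
  have hcomp : extVec n 1 u ∘ σ = augOrder u := by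
    funext k
    by_cases h : (k : ℕ) < n - 1
    · have hσ : (σ k : ℕ) = (τ ⟨(k : ℕ), h⟩ : ℕ) := by simp [σ, dif_pos h]
      have hσlt : (σ k : ℕ) < n - 1 := by rw [hσ]; exact (τ ⟨(k : ℕ), h⟩).isLt
      simp only [Function.comp_apply, extVec, dif_pos hσlt, augOrder,
        dif_pos (by omega : (k : ℕ) + 1 < n)]
      congr 1
      apply Fin.ext
      simp [hσ]
      rfl
    · have hσ : σ k = k := by simp [σ, dif_neg h]
      simp only [Function.comp_apply, extVec, hσ, dif_neg h, augOrder,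
        dif_neg (by omega : ¬ (k : ℕ) + 1 < n)]
  have hmono : Monotone (augOrder u) := by
    intro j k hjk
    unfold augOrder
    by_cases hk : (k : ℕ) + 1 < n
    · have hj : (j : ℕ) + 1 < n := by have : (j : ℕ) ≤ (k : ℕ) := hjk; omega
      rw [dif_pos hj, dif_pos hk]
      exact sortedVec_monotone u (by simpa [Fin.mk_le_mk] using hjk)
    · rw [dif_neg hk]
      by_cases hj : (j : ℕ) + 1 < n
      · rw [dif_pos hj]; exact h1 _
      · rw [dif_neg hj]
  rw [← hcomp]
  exact (sortedVec_perm_eq (hcomp ▸ hmono)).symm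

end Sorted

section Quantile

open Set

/-- The quantile function of a cdf (with input clamped above at 1). -/
noncomputable def qf (F : ℝ → ℝ) (u : ℝ) : ℝ := sInf {t | min u 1 ≤ F t}

variable (μ : Measure ℝ) [IsProbabilityMeasure μ]

lemma qf_set_nonempty (M : ℝ) (hFM : cdf μ M = 1) {u : ℝ} :
    {t | min u 1 ≤ cdf μ t}.Nonempty :=
  ⟨M, by simp only [mem_setOf_eq, hFM]; exact min_le_right u 1⟩

lemma qf_set_bddBelow {u : ℝ} (hu : 0 < u) : BddBelow {t | min u 1 ≤ cdf μ t} := by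
  have h0 : (0 : ℝ) < min u 1 := lt_min hu one_pos
  obtain ⟨t0, ht0⟩ := ((tendsto_cdf_atBot μ).eventually_lt_const h0).exists
  refine ⟨t0, fun s hs => ?_⟩
  by_contra hc
  push_neg at hc
  exact absurd (le_trans hs (monotone_cdf μ hc.le)) (not_le.mpr ht0)

lemma qf_spec (M : ℝ) (hFM : cdf μ M = 1) {u : ℝ} (hu : 0 < u) :
    min u 1 ≤ cdf μ (qf (cdf μ) u) := by
  have hne := qf_set_nonempty μ M hFM (u := u)
  have hbdd := qf_set_bddBelow μ hu
  set x := qf (cdf μ) u with hx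
  have hten : Filter.Tendsto (cdf μ) (nhdsWithin x (Ioi x)) (nhds (cdf μ x)) :=
    ((cdf μ).right_continuous x).mono_left (nhdsWithin_mono x Ioi_subset_Ici_self)
  refine ge_of_tendsto hten ?_
  refine eventually_nhdsWithin_of_forall (fun t ht => ?_)
  obtain ⟨s, hs, hst⟩ := exists_lt_of_csInf_lt hne (show sInf {t | min u 1 ≤ cdf μ t} < t from ht)
  exact le_trans hs (monotone_cdf μ hst.le)

lemma qf_le_iff (M : ℝ) (hFM : cdf μ M = 1) {u t : ℝ} (hu : 0 < u) :
    qf (cdf μ) u ≤ t ↔ min u 1 ≤ cdf μ t := by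
  constructor
  · intro h
    exact le_trans (qf_spec μ M hFM hu) (monotone_cdf μ h)
  · intro h
    exact csInf_le (qf_set_bddBelow μ hu) h

lemma qf_le_M (M : ℝ) (hFM : cdf μ M = 1) {u : ℝ} (hu : 0 < u) : qf (cdf μ) u ≤ M :=
  (qf_le_iff μ M hFM hu).mpr (by rw [hFM]; exact min_le_right u 1)

lemma qf_monotoneOn (M : ℝ) (hFM : cdf μ M = 1) : MonotoneOn (qf (cdf μ)) (Ioc (0 : ℝ) 1) := by
  intro a ha b hb hab
  refine (qf_le_iff μ M hFM ha.1).mpr ?_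
  calc min a 1 ≤ min b 1 := min_le_min hab le_rfl
    _ ≤ cdf μ (qf (cdf μ) b) := qf_spec μ M hFM hb.1

lemma qf_nonpos {u : ℝ} (hu : u ≤ 0) : qf (cdf μ) u = 0 := by
  have h : {t | min u 1 ≤ cdf μ t} = univ := by
    ext t
    simp only [mem_setOf_eq, mem_univ, iff_true]
    exact le_trans (le_trans (min_le_left u 1) hu) (cdf_nonneg μ t)
  rw [qf, h]
  exact Real.sInf_of_not_bddBelow fun ⟨b, hb⟩ => absurd (hb (Set.mem_univ (b - 1))) (by norm_num)

lemma measurable_qf (M : ℝ) (hFM : cdf μ M = 1) : Measurable (qf (cdf μ)) := by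
  apply measurable_of_Iic
  intro t
  have h : qf (cdf μ) ⁻¹' Iic t
      = (Iic 0 ∩ {u : ℝ | (0 : ℝ) ≤ t}) ∪ (Ioi 0 ∩ (Iic (cdf μ t) ∪ {u : ℝ | 1 ≤ cdf μ t})) := by
    ext u
    by_cases hu : 0 < u
    · simp only [mem_preimage, mem_Iic, mem_union, mem_inter_iff, mem_setOf_eq, mem_Ioi]
      rw [qf_le_iff μ M hFM hu, min_le_iff]
      constructor
      · rintro (h | h)
        · exact Or.inr ⟨hu, Or.inl h⟩
        · exact Or.inr ⟨hu, Or.inr h⟩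
      · rintro (⟨h1, _⟩ | ⟨_, (h | h)⟩)
        · exact absurd h1 (not_le.mpr hu)
        · exact Or.inl h
        · exact Or.inr h
    · push_neg at hu
      simp only [mem_preimage, mem_Iic, mem_union, mem_inter_iff, mem_setOf_eq, mem_Ioi,
        qf_nonpos μ hu]
      constructor
      · intro h; exact Or.inl ⟨hu, h⟩
      · rintro (⟨_, h⟩ | ⟨h, _⟩)
        · exact h
        · exact absurd h (not_lt.mpr hu)
  rw [h]
  exact ((measurableSet_Iic.inter (MeasurableSet.const _)).union
    (measurableSet_Ioi.inter (measurableSet_Iic.union (MeasurableSet.const _))))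

lemma map_qf (M : ℝ) (hFM : cdf μ M = 1) :
    Measure.map (qf (cdf μ)) (volume.restrict (Icc (0 : ℝ) 1)) = μ := by
  have hinst : IsFiniteMeasure (Measure.map (qf (cdf μ)) (volume.restrict (Icc (0 : ℝ) 1))) := by
    constructor
    rw [Measure.map_apply (measurable_qf μ M hFM) MeasurableSet.univ]
    simp [Real.volume_Icc]
  refine Measure.ext_of_Iic _ μ (fun t => ?_)
  rw [Measure.map_apply (measurable_qf μ M hFM) measurableSet_Iic,
    Measure.restrict_apply' measurableSet_Icc]
  have hsub1 : Ioc 0 (cdf μ t) ⊆ qf (cdf μ) ⁻¹' Iic t ∩ Icc 0 1 := by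
    intro u hu
    have hu1 : u ≤ 1 := le_trans hu.2 (cdf_le_one μ t)
    refine ⟨?_, ⟨hu.1.le, hu1⟩⟩
    simp only [mem_preimage, mem_Iic]
    exact (qf_le_iff μ M hFM hu.1).mpr (min_le_iff.mpr (Or.inl hu.2))
  have hsub2 : qf (cdf μ) ⁻¹' Iic t ∩ Icc 0 1 ⊆ Ioc 0 (cdf μ t) ∪ {0} := by
    rintro u ⟨hu1, hu2⟩
    rcases eq_or_lt_of_le hu2.1 with h0 | h0
    · exact Or.inr (by simp [← h0])
    · refine Or.inl ⟨h0, ?_⟩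
      have h := (qf_le_iff μ M hFM h0).mp hu1
      rwa [min_eq_left hu2.2] at h
  have hvol : volume (qf (cdf μ) ⁻¹' Iic t ∩ Icc 0 1) = ENNReal.ofReal (cdf μ t) := by
    refine le_antisymm ?_ ?_
    · calc volume (qf (cdf μ) ⁻¹' Iic t ∩ Icc 0 1) ≤ volume (Ioc 0 (cdf μ t) ∪ {0}) :=
            measure_mono hsub2
        _ ≤ volume (Ioc 0 (cdf μ t)) + volume ({0} : Set ℝ) := measure_union_le _ _
        _ = ENNReal.ofReal (cdf μ t) := by simp [Real.volume_Ioc]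
    · calc ENNReal.ofReal (cdf μ t) = volume (Ioc 0 (cdf μ t)) := by simp [Real.volume_Ioc]
        _ ≤ _ := measure_mono hsub1
  rw [hvol, ofReal_cdf μ t]

end Quantile

section Pointwise

/-- The key pointwise comparison: if the spacings vector lies in `A + K^n`, then so does the
coverage vector of the transformed sample. -/
lemma pointwise_key {n : ℕ} (hn : 1 ≤ n) (F G : ℝ → ℝ) (M : ℝ)
    (hGmono : MonotoneOn G (Set.Ioc 0 1))
    (hFG : ∀ r ∈ Set.Ioc (0 : ℝ) 1, r ≤ F (G r))
    (hG1 : G 1 = M) (hFM : F M = 1)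
    (A : Set (Fin n → ℝ)) {u : Fin (n - 1) → ℝ} (hu : ∀ i, u i ∈ Set.Ioc (0 : ℝ) 1)
    (hmem : spacings u ∈ A + majorCone n) :
    coverage F (sortedVec (extVec n M (fun i => G (u i)))) ∈ A + majorCone n := by
  have hU1 : ∀ i, u i ≤ 1 := fun i => (hu i).2
  have h1mem : (1 : ℝ) ∈ Set.Ioc (0 : ℝ) 1 := ⟨one_pos, le_rfl⟩
  have hext : ∀ i, extVec n 1 u i ∈ Set.Ioc (0 : ℝ) 1 := by
    intro i
    unfold extVec
    by_cases h : (i : ℕ) < n - 1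
    · rw [dif_pos h]; exact hu _
    · rw [dif_neg h]; exact h1mem
  have step1 : extVec n M (fun i => G (u i)) = G ∘ extVec n 1 u := by
    funext i
    simp only [extVec, Function.comp_apply]
    by_cases h : (i : ℕ) < n - 1
    · rw [dif_pos h, dif_pos h]
    · rw [dif_neg h, dif_neg h, hG1]
  have step2 : sortedVec (extVec n M fun i => G (u i)) = G ∘ augOrder u := by
    rw [step1, sortedVec_comp hGmono _ hext, sortedVec_extVec_one hn u hU1]
  have haug : ∀ k : Fin n, augOrder u k ∈ Set.Ioc (0 : ℝ) 1 := by
    intro k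
    unfold augOrder
    by_cases h : (k : ℕ) + 1 < n
    · rw [dif_pos h]; exact hu _
    · rw [dif_neg h]; exact h1mem
  have hauglast : augOrder u ⟨n - 1, by omega⟩ = 1 := by
    unfold augOrder
    rw [dif_neg (by simp; omega)]
  have hfiltn : ∀ x : Fin n → ℝ,
      ∑ i, x i = ∑ i ∈ Finset.univ.filter (fun i : Fin n => (i : ℕ) < n), x i := by
    intro x
    congr 1
    symm
    apply Finset.filter_true_of_mem
    intro i _
    exact i.isLt
  refine mem_add_majorCone_of_dominates hmem (fun k hk => ?_) ?_
  · rcases Nat.eq_zero_or_pos k with rfl | hk0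
    · simp
    · rw [step2, sum_coverage F _ k (le_of_lt hk), sum_spacings u k (le_of_lt hk),
        dif_pos hk0, dif_pos hk0]
      exact hFG _ (haug _)
  · rw [hfiltn, hfiltn, step2, sum_coverage F _ n (le_refl n), sum_spacings u n (le_refl n),
      dif_pos (by omega : 0 < n), dif_pos (by omega : 0 < n), hauglast,
      Function.comp_apply, hauglast, hG1, hFM]

end Pointwise

section JointLaw

lemma map_joint_eq_pi {Ω : Type*} [MeasurableSpace Ω] (P : Measure Ω) [IsProbabilityMeasure P]
    {ι : Type*} [Fintype ι] (f : ι → Ω → ℝ) (hmeas : ∀ i, Measurable (f i))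
    (hindep : iIndepFun f P) (ν : Measure ℝ) [SigmaFinite ν]
    (hlaw : ∀ i, Measure.map (f i) P = ν) :
    Measure.map (fun ω i => f i ω) P = Measure.pi (fun _ => ν) := by
  refine (Measure.pi_eq fun s hs => ?_).symm
  rw [Measure.map_apply (measurable_pi_lambda _ hmeas) (MeasurableSet.univ_pi hs)]
  have hpre : (fun ω i => f i ω) ⁻¹' Set.pi Set.univ s = ⋂ i ∈ Finset.univ, f i ⁻¹' s i := by
    ext ω
    simp [Set.mem_pi]
  rw [hpre, hindep.measure_inter_preimage_eq_mul Finset.univ (fun i _ => hs i)]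
  refine Finset.prod_congr rfl fun i _ => ?_
  rw [← hlaw i, Measure.map_apply (hmeas i) (hs i)]

end JointLaw

/-- with `W` the coverage vector of the order statistics of `Z_1, …, Z_{n-1}`
(iid copies of `Z`) augmented by `Z_n := esssup Z`, and `ν` the uniform spacings vector built
from `n-1` iid `U[0,1]` variables, for every measurable `A ⊆ Δ^n` with `A + K^n` measurable,
`P[W ∈ A + K^n] ≥ P[ν ∈ A + K^n]`. -/
theorem prob_coverage_ge_prob_spacings
    {Ω : Type*} [MeasurableSpace Ω] (P : Measure Ω) [IsProbabilityMeasure P]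
    (n : ℕ) (hn : 1 ≤ n)
    (Z : Ω → ℝ) (hZmeas : Measurable Z)
    (M : ℝ) (hM_ub : ∀ᵐ ω ∂P, Z ω ≤ M) (hM_least : ∀ c : ℝ, (∀ᵐ ω ∂P, Z ω ≤ c) → M ≤ c)
    (Zs : Fin (n - 1) → Ω → ℝ) (hZs_meas : ∀ i, Measurable (Zs i))
    (hZs_indep : iIndepFun Zs P)
    (hZs_law : ∀ i, Measure.map (Zs i) P = Measure.map Z P)
    (F : ℝ → ℝ) (hF : F = fun t => (P {ω | Z ω ≤ t}).toReal)
    (W : Ω → Fin n → ℝ)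
    (hW : W = fun ω => coverage F (sortedVec fun j => fullVec Zs M j ω))
    (Us : Fin (n - 1) → Ω → ℝ) (hUs_meas : ∀ i, Measurable (Us i))
    (hUs_indep : iIndepFun Us P)
    (hUs_law : ∀ i, Measure.map (Us i) P = volume.restrict (Set.Icc (0 : ℝ) 1))
    (A : Set (Fin n → ℝ)) (hAsub : A ⊆ stdSimplex ℝ (Fin n)) (hAmeas : MeasurableSet A)
    (hAKmeas : MeasurableSet (A + majorCone n)) :
    P {ω | spacings (fun i => Us i ω) ∈ A + majorCone n} ≤
      P {ω | W ω ∈ A + majorCone n} := by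
  classical
  set μZ := Measure.map Z P with hμZ
  haveI : IsProbabilityMeasure μZ := Measure.isProbabilityMeasure_map hZmeas.aemeasurable
  set unif := volume.restrict (Set.Icc (0 : ℝ) 1) with hunif
  haveI : IsProbabilityMeasure unif := by
    constructor
    rw [hunif, Measure.restrict_apply_univ]
    simp [Real.volume_Icc]
  -- F is the cdf of μZ
  have hFc : F = ⇑(cdf μZ) := by
    funext t
    rw [hF, cdf_eq_real, measureReal_def, hμZ, Measure.map_apply hZmeas measurableSet_Iic]
    rfl
  -- cdf μZ M = 1
  have hPM : P {ω | Z ω ≤ M} = 1 := by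
    show P (Z ⁻¹' Set.Iic M) = 1
    rw [← prob_compl_eq_zero_iff (hZmeas measurableSet_Iic)]
    have h := ae_iff.mp hM_ub
    simpa [Set.compl_setOf, Set.preimage, not_le] using h
  have hFM1 : cdf μZ M = 1 := by
    rw [cdf_eq_real, measureReal_def, hμZ, Measure.map_apply hZmeas measurableSet_Iic]
    show (P {ω | Z ω ≤ M}).toReal = 1
    rw [hPM]
    simp
  set G := qf (cdf μZ) with hG
  have hGmeas : Measurable G := measurable_qf μZ M hFM1
  have hGmp : MeasurePreserving G unif μZ := ⟨hGmeas, map_qf μZ M hFM1⟩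
  -- G 1 = M
  have hG1M : G 1 = M := by
    refine le_antisymm (qf_le_M μZ M hFM1 one_pos) ?_
    have hcdf1 : cdf μZ (G 1) = 1 := by
      refine le_antisymm (cdf_le_one _ _) ?_
      have := qf_spec μZ M hFM1 (u := 1) one_pos
      simpa using this
    have hμ1 : μZ (Set.Iic (G 1)) = 1 := by
      rw [← ofReal_cdf μZ (G 1), hcdf1]
      simp
    have hP1 : P {ω | Z ω ≤ G 1} = 1 := by
      rw [hμZ, Measure.map_apply hZmeas measurableSet_Iic] at hμ1
      exact hμ1
    refine hM_least (G 1) ?_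
    rw [ae_iff]
    have := (prob_compl_eq_zero_iff (μ := P) (hZmeas measurableSet_Iic)).mpr
      (show P (Z ⁻¹' Set.Iic (G 1)) = 1 from hP1)
    simpa [Set.compl_setOf, Set.preimage, not_le] using this
  have hFG : ∀ r ∈ Set.Ioc (0 : ℝ) 1, r ≤ F (G r) := by
    intro r hr
    rw [hFc]
    have := qf_spec μZ M hFM1 hr.1
    rwa [min_eq_left hr.2] at this
  have hGmonoOn : MonotoneOn G (Set.Ioc 0 1) := qf_monotoneOn μZ M hFM1
  have hFMval : F M = 1 := by rw [hFc]; exact hFM1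
  -- measurability of the deterministic maps
  have haug_meas : ∀ k : Fin n, Measurable fun u : Fin (n - 1) → ℝ => augOrder u k := by
    intro k
    unfold augOrder
    by_cases h : (k : ℕ) + 1 < n
    · simp only [dif_pos h]
      exact measurable_sortedVec _
    · simp only [dif_neg h]
      exact measurable_const
  have hsp_meas : Measurable fun u : Fin (n - 1) → ℝ => spacings u := by
    apply measurable_pi_lambda
    intro i
    unfold spacings
    refine (haug_meas i).sub ?_
    by_cases h : 0 < (i : ℕ)
    · simp only [dif_pos h]
      exact haug_meas _
    · simp only [dif_neg h]
      exact measurable_const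
  have hFmeas : Measurable F := by
    rw [hFc]
    exact (monotone_cdf μZ).measurable
  have hext_meas : Measurable fun v : Fin (n - 1) → ℝ => extVec n M v := by
    apply measurable_pi_lambda
    intro i
    unfold extVec
    by_cases h : (i : ℕ) < n - 1
    · simp only [dif_pos h]
      exact measurable_pi_apply _
    · simp only [dif_neg h]
      exact measurable_const
  have hsort_meas : ∀ j : Fin n, Measurable fun v : Fin (n - 1) → ℝ => sortedVec (extVec n M v) j :=
    fun j => (measurable_sortedVec j).comp hext_meas
  have hW_meas : Measurable fun v : Fin (n - 1) → ℝ => coverage F (sortedVec (extVec n M v)) := by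
    apply measurable_pi_lambda
    intro i
    unfold coverage
    refine (hFmeas.comp (hsort_meas i)).sub ?_
    by_cases h : 0 < (i : ℕ)
    · simp only [dif_pos h]
      exact hFmeas.comp (hsort_meas _)
    · simp only [dif_neg h]
      exact measurable_const
  -- rewrite both sides as product-measure quantities
  have hUjoint : Measure.map (fun ω i => Us i ω) P = Measure.pi (fun _ : Fin (n - 1) => unif) :=
    map_joint_eq_pi P Us hUs_meas hUs_indep unif hUs_law
  have hZjoint : Measure.map (fun ω i => Zs i ω) P = Measure.pi (fun _ : Fin (n - 1) => μZ) :=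
    map_joint_eq_pi P Zs hZs_meas hZs_indep μZ hZs_law
  have hL : P {ω | spacings (fun i => Us i ω) ∈ A + majorCone n}
      = (Measure.pi fun _ : Fin (n - 1) => unif)
        ((fun u : Fin (n - 1) → ℝ => spacings u) ⁻¹' (A + majorCone n)) := by
    rw [← hUjoint, Measure.map_apply (measurable_pi_lambda _ hUs_meas) (hsp_meas hAKmeas)]
    rfl
  have hR : P {ω | W ω ∈ A + majorCone n}
      = (Measure.pi fun _ : Fin (n - 1) => μZ)
        ((fun v : Fin (n - 1) → ℝ => coverage F (sortedVec (extVec n M v))) ⁻¹'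
          (A + majorCone n)) := by
    rw [← hZjoint, Measure.map_apply (measurable_pi_lambda _ hZs_meas) (hW_meas hAKmeas)]
    congr 1
    ext ω
    rw [hW]
    rfl
  have hpiG : MeasurePreserving (fun (u : Fin (n - 1) → ℝ) i => G (u i))
      (Measure.pi fun _ => unif) (Measure.pi fun _ => μZ) :=
    measurePreserving_pi (fun _ : Fin (n - 1) => unif) (fun _ => μZ) (fun _ => hGmp)
  have hR2 : (Measure.pi fun _ : Fin (n - 1) => μZ)
        ((fun v : Fin (n - 1) → ℝ => coverage F (sortedVec (extVec n M v))) ⁻¹'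
          (A + majorCone n))
      = (Measure.pi fun _ : Fin (n - 1) => unif)
        ((fun (u : Fin (n - 1) → ℝ) i => G (u i)) ⁻¹'
          ((fun v : Fin (n - 1) → ℝ => coverage F (sortedVec (extVec n M v))) ⁻¹'
            (A + majorCone n))) := by
    rw [← hpiG.map_eq, Measure.map_apply hpiG.measurable (hW_meas hAKmeas)]
  rw [hL, hR, hR2]
  -- a.e. comparison
  haveI : IsProbabilityMeasure (Measure.pi fun _ : Fin (n - 1) => unif) := by infer_instance
  have hae : ∀ᵐ u ∂(Measure.pi fun _ : Fin (n - 1) => unif), ∀ i, u i ∈ Set.Ioc (0 : ℝ) 1 := by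
    have hQmeas : MeasurableSet (Set.pi Set.univ fun _ : Fin (n - 1) => Set.Ioc (0 : ℝ) 1) :=
      MeasurableSet.univ_pi fun _ => measurableSet_Ioc
    have hQ : (Measure.pi fun _ : Fin (n - 1) => unif)
        (Set.pi Set.univ fun _ => Set.Ioc (0 : ℝ) 1) = 1 := by
      rw [Measure.pi_pi]
      have h1 : unif (Set.Ioc (0 : ℝ) 1) = 1 := by
        rw [hunif, Measure.restrict_apply' measurableSet_Icc,
          Set.inter_eq_left.mpr Set.Ioc_subset_Icc_self]
        simp [Real.volume_Ioc]
      simp [h1]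
    have hcompl := (prob_compl_eq_zero_iff hQmeas).mpr hQ
    rw [ae_iff]
    convert hcompl using 2
    ext u
    simp [Set.mem_pi]
  apply measure_mono_ae
  filter_upwards [hae] with u hu hmem
  exact pointwise_key hn F G M hGmonoOn hFG hG1M hFMval A hu hmem
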